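/- Fix p ∈ K* and n-vectors x, y of indeterminates, with indices extended to Z by x_{j+n} = p^{-1}x_j, y_{j+n} = p^{-1}y_j. The discrete Toda system x_j y_j = u_j v_j, 1/x_j + 1/y_{j+1} = 1/u_j + 1/v_{j+1} (j ∈ Z) for unknowns u, v with the same quasi-periodicity has exactly two solutions: (1) u_j = x_j, v_j = y_j; and (2) u_j = p·y_j·P_j/P_{j−1}, v_j = p^{-1}·x_j·P_{j−1}/P_j, where P_j = Σ_{k=1}^{n} y_{j+1}⋯y_{j+k} x_{j+k}⋯x_{j+n}. Moreover, the two solutions are characterized respectively by u₁⋯u_n = x₁⋯x_n, v₁⋯v_n = y₁⋯y_n, and by u₁⋯u_n = p^{-1}y₁⋯y_n, v₁⋯v_n = p·x₁⋯x_n. -/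

import Mathlib

open Finset

/-- `P_j = Σ_{k=1}^{n} y_{j+1}⋯y_{j+k} · x_{j+k}⋯x_{j+n}`. -/
def Pfun {K : Type*} [Field K] (n : ℕ) (x y : ℕ → K) (j : ℕ) : K :=
  ∑ k ∈ Finset.Icc 1 n,
    (∏ t ∈ Finset.Icc (j + 1) (j + k), y t) * ∏ t ∈ Finset.Icc (j + k) (j + n), x t

/-- The discrete Toda system `x_j y_j = u_j v_j`,
`1/x_j + 1/y_{j+1} = 1/u_j + 1/v_{j+1}` for the unknowns `(u,v)` with the quasi-periodicity
`u_{j+n} = p⁻¹u_j`, `v_{j+n} = p⁻¹v_j` (indices `j ≥ 1`). -/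
def SysDT {K : Type*} [Field K] (n : ℕ) (p : K) (x y u v : ℕ → K) : Prop :=
  (∀ j, 1 ≤ j → x j * y j = u j * v j) ∧
  (∀ j, 1 ≤ j → (x j)⁻¹ + (y (j + 1))⁻¹ = (u j)⁻¹ + (v (j + 1))⁻¹) ∧
  (∀ j, 1 ≤ j → u (j + n) = p⁻¹ * u j) ∧
  (∀ j, 1 ≤ j → v (j + n) = p⁻¹ * v j)

section Aux

variable {K : Type*} [Field K]

/-- bottom split of a sum over `Icc`. -/
lemma sum_Icc_bot' {M : Type*} [AddCommMonoid M] {a b : ℕ} (h : a ≤ b) (f : ℕ → M) :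
    ∑ t ∈ Icc a b, f t = f a + ∑ t ∈ Icc (a + 1) b, f t := by
  rw [← Finset.Ico_add_one_right_eq_Icc, Finset.sum_eq_sum_Ico_succ_bot (show a < b + 1 by omega),
    Finset.Ico_add_one_right_eq_Icc]

/-- bottom split of a product over `Icc`. -/
lemma prod_Icc_bot' {M : Type*} [CommMonoid M] {a b : ℕ} (h : a ≤ b) (f : ℕ → M) :
    ∏ t ∈ Icc a b, f t = f a * ∏ t ∈ Icc (a + 1) b, f t := by
  rw [← Finset.Ico_add_one_right_eq_Icc, Finset.prod_eq_prod_Ico_succ_bot (show a < b + 1 by omega),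
    Finset.Ico_add_one_right_eq_Icc]

/-- shift of a product by `n` under quasi-periodicity. -/
lemma prod_shift' {n : ℕ} {p : K} {x : ℕ → K}
    (hxper : ∀ j, x (j + n) = p⁻¹ * x j) (a b : ℕ) :
    ∏ t ∈ Icc (a + n) (b + n), x t = p⁻¹ ^ (b + 1 - a) * ∏ t ∈ Icc a b, x t := by
  rw [← Finset.map_add_right_Icc, Finset.prod_map]
  simp only [addRightEmbedding_apply, hxper]
  rw [Finset.prod_mul_distrib, Finset.prod_const, Nat.card_Icc]

/-- quasi-periodicity of `Pfun`. -/
lemma Pfun_per {n : ℕ} {p : K} {x y : ℕ → K}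
    (hxper : ∀ j, x (j + n) = p⁻¹ * x j) (hyper : ∀ j, y (j + n) = p⁻¹ * y j) (j : ℕ) :
    Pfun n x y (j + n) = p⁻¹ ^ (n + 1) * Pfun n x y j := by
  unfold Pfun
  rw [Finset.mul_sum]
  refine Finset.sum_congr rfl fun k hk => ?_
  obtain ⟨hk1, hk2⟩ := Finset.mem_Icc.mp hk
  have e1 : j + n + 1 = (j + 1) + n := by omega
  have e2 : j + n + k = (j + k) + n := by omega
  rw [e1, e2, prod_shift' hyper, prod_shift' hxper]
  have c1 : j + k + 1 - (j + 1) = k := by omega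
  have c2 : j + n + 1 - (j + k) = n + 1 - k := by omega
  rw [c1, c2]
  rw [show (p:K)⁻¹ ^ (n + 1) = p⁻¹ ^ k * p⁻¹ ^ (n + 1 - k) from by
    rw [← pow_add]; congr 1; omega]
  ring

/-- auxiliary summand. -/
def Cfun {K : Type*} [Field K] (n : ℕ) (x y : ℕ → K) (j k : ℕ) : K :=
  (∏ t ∈ Finset.Icc (j + 1) (j + k), y t) * ∏ t ∈ Finset.Icc (j + k) (j + n + 1), x t

/-- the key identity `p·y_{j+1}·P_{j+1} = x_{j+1}·P_j + x_{j+1}·y_{j+1}·D_j`. -/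
lemma Pfun_ident {n : ℕ} {p : K} {x y : ℕ → K} (hn : 1 ≤ n) (hp : p ≠ 0)
    (hxper : ∀ j, x (j + n) = p⁻¹ * x j) (hyper : ∀ j, y (j + n) = p⁻¹ * y j) (j : ℕ) :
    p * y (j + 1) * Pfun n x y (j + 1) =
      x (j + 1) * Pfun n x y j +
        x (j + 1) * y (j + 1) *
          (p⁻¹ * (∏ t ∈ Finset.Icc (j + 1) (j + n), y t) -
            ∏ t ∈ Finset.Icc (j + 1) (j + n), x t) := by
  have h1 : y (j + 1) * Pfun n x y (j + 1) = ∑ k ∈ Icc 1 n, Cfun n x y j (k + 1) := by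
    unfold Pfun
    rw [Finset.mul_sum]
    refine Finset.sum_congr rfl fun k hk => ?_
    obtain ⟨hk1, hk2⟩ := Finset.mem_Icc.mp hk
    unfold Cfun
    rw [prod_Icc_bot' (show j + 1 ≤ j + (k + 1) by omega)]
    rw [show j + 1 + 1 = j + 2 by omega, show j + (k + 1) = j + 1 + k by omega,
      show j + 1 + n = j + n + 1 by omega]
    ring
  have h2 : ∑ k ∈ Icc 1 n, Cfun n x y j (k + 1) = ∑ k ∈ Icc 2 (n + 1), Cfun n x y j k := by
    rw [← Finset.map_add_right_Icc 1 n 1, Finset.sum_map]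
    simp [addRightEmbedding_apply]
  have h3 : ∑ k ∈ Icc 1 (n + 1), Cfun n x y j k
      = (∑ k ∈ Icc 1 n, Cfun n x y j k) + Cfun n x y j (n + 1) :=
    Finset.sum_Icc_succ_top (by omega) _
  have h4 : ∑ k ∈ Icc 1 (n + 1), Cfun n x y j k
      = Cfun n x y j 1 + ∑ k ∈ Icc 2 (n + 1), Cfun n x y j k :=
    sum_Icc_bot' (by omega) _
  have h5 : Cfun n x y j 1
      = y (j + 1) * ((∏ t ∈ Icc (j + 1) (j + n), x t) * x (j + n + 1)) := by
    unfold Cfun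
    rw [Finset.prod_Icc_succ_top (show j + 1 ≤ j + n + 1 by omega)]
    simp
  have h6 : Cfun n x y j (n + 1)
      = ((∏ t ∈ Icc (j + 1) (j + n), y t) * y (j + n + 1)) * x (j + n + 1) := by
    unfold Cfun
    rw [show j + (n + 1) = j + n + 1 by omega,
      Finset.prod_Icc_succ_top (show j + 1 ≤ j + n + 1 by omega)]
    simp
  have h7 : ∑ k ∈ Icc 1 n, Cfun n x y j k = x (j + n + 1) * Pfun n x y j := by
    unfold Pfun Cfun
    rw [Finset.mul_sum]
    refine Finset.sum_congr rfl fun k hk => ?_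
    obtain ⟨hk1, hk2⟩ := Finset.mem_Icc.mp hk
    rw [Finset.prod_Icc_succ_top (show j + k ≤ j + n + 1 by omega)]
    ring
  have hxn : x (j + n + 1) = p⁻¹ * x (j + 1) := by
    rw [show j + n + 1 = (j + 1) + n by omega, hxper]
  have hyn : y (j + n + 1) = p⁻¹ * y (j + 1) := by
    rw [show j + n + 1 = (j + 1) + n by omega, hyper]
  have key : y (j + 1) * Pfun n x y (j + 1)
      = Cfun n x y j 1 + ∑ k ∈ Icc 2 (n+1), Cfun n x y j k - Cfun n x y j 1 := by
    rw [h1, h2]; ring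
  rw [← h4, h3, h7, h5, h6, hxn, hyn] at key
  rw [show p * y (j + 1) * Pfun n x y (j + 1) = p * (y (j + 1) * Pfun n x y (j + 1)) by ring,
    key]
  field_simp
  ring

lemma window_shift {n : ℕ} {p : K} {y : ℕ → K} (hy : ∀ j, y j ≠ 0) (hp : p ≠ 0)
    (hyper : ∀ j, y (j + n) = p⁻¹ * y j) (i : ℕ) :
    ∏ t ∈ Icc (i + 2) (i + 1 + n), y t = p⁻¹ * ∏ t ∈ Icc (i + 1) (i + n), y t := by
  have h1 := prod_Icc_bot' (show i + 1 ≤ i + 1 + n by omega) y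
  have h2 := Finset.prod_Icc_succ_top (show i + 1 ≤ i + n + 1 by omega) y
  rw [show i + 1 + 1 = i + 2 by omega] at h1
  rw [show i + n + 1 = i + 1 + n by omega] at h2
  have h3 : y (i + 1 + n) = p⁻¹ * y (i + 1) := hyper (i + 1)
  have h := h1.symm.trans h2
  rw [h3] at h
  have key : y (i + 1) * (p⁻¹ * ∏ t ∈ Icc (i + 1) (i + n), y t)
      = y (i + 1) * ∏ t ∈ Icc (i + 2) (i + 1 + n), y t := by
    field_simp at h ⊢
    linear_combination -h
  exact (mul_left_cancel₀ (hy (i + 1)) key).symm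

lemma Dshift {n : ℕ} {p : K} {x y : ℕ → K} (hx : ∀ j, x j ≠ 0) (hy : ∀ j, y j ≠ 0) (hp : p ≠ 0)
    (hxper : ∀ j, x (j + n) = p⁻¹ * x j) (hyper : ∀ j, y (j + n) = p⁻¹ * y j) (i : ℕ) :
    p⁻¹ * (∏ t ∈ Icc (i + 1) (i + n), y t) - ∏ t ∈ Icc (i + 1) (i + n), x t =
      p * (p⁻¹ * (∏ t ∈ Icc (i + 2) (i + 1 + n), y t) - ∏ t ∈ Icc (i + 2) (i + 1 + n), x t) := by
  rw [window_shift hy hp hyper i, window_shift hx hp hxper i]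
  field_simp

/-- inverse of the second-family `u` value. -/
lemma inv_u2 {n : ℕ} {p : K} {x y : ℕ → K} (hn : 1 ≤ n) (hp : p ≠ 0)
    (hx : ∀ j, x j ≠ 0) (hy : ∀ j, y j ≠ 0)
    (hxper : ∀ j, x (j + n) = p⁻¹ * x j) (hyper : ∀ j, y (j + n) = p⁻¹ * y j)
    (hP : ∀ j, Pfun n x y j ≠ 0) (i : ℕ) :
    (p * y (i + 1) * Pfun n x y (i + 1) / Pfun n x y i)⁻¹
      = (x (i + 1))⁻¹ - (p⁻¹ * (∏ t ∈ Icc (i + 2) (i + 1 + n), y t)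
          - ∏ t ∈ Icc (i + 2) (i + 1 + n), x t) / Pfun n x y (i + 1) := by
  have Ii := Pfun_ident hn hp hxper hyper i
  have Ds := Dshift hx hy hp hxper hyper i
  rw [inv_div]
  rw [Ds] at Ii
  rw [inv_eq_one_div, div_sub_div _ _ (hx (i + 1)) (hP (i + 1)), one_mul,
    div_eq_div_iff (mul_ne_zero (mul_ne_zero hp (hy _)) (hP _))
      (mul_ne_zero (hx (i + 1)) (hP (i + 1)))]
  linear_combination (-Pfun n x y (i + 1)) * Ii

/-- inverse of the second-family `v` value. -/
lemma inv_v2 {n : ℕ} {p : K} {x y : ℕ → K} (hn : 1 ≤ n) (hp : p ≠ 0)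
    (hx : ∀ j, x j ≠ 0) (hy : ∀ j, y j ≠ 0)
    (hxper : ∀ j, x (j + n) = p⁻¹ * x j) (hyper : ∀ j, y (j + n) = p⁻¹ * y j)
    (hP : ∀ j, Pfun n x y j ≠ 0) (i : ℕ) :
    (p⁻¹ * x (i + 2) * Pfun n x y (i + 1) / Pfun n x y (i + 2))⁻¹
      = (y (i + 2))⁻¹ + (p⁻¹ * (∏ t ∈ Icc (i + 2) (i + 1 + n), y t)
          - ∏ t ∈ Icc (i + 2) (i + 1 + n), x t) / Pfun n x y (i + 1) := by
  have Ii := Pfun_ident hn hp hxper hyper (i + 1)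
  rw [show i + 1 + 1 = i + 2 by omega] at Ii
  rw [inv_div]
  rw [show (y (i + 2))⁻¹ = 1 / y (i + 2) from inv_eq_one_div _,
    div_add_div _ _ (hy (i + 2)) (hP (i + 1)), one_mul,
    div_eq_div_iff (mul_ne_zero (mul_ne_zero (inv_ne_zero hp) (hx _)) (hP _))
      (mul_ne_zero (hy (i + 2)) (hP (i + 1)))]
  have hp1 : p * p⁻¹ = 1 := mul_inv_cancel₀ hp
  linear_combination (p⁻¹ * Pfun n x y (i + 1)) * Ii
    - (y (i + 2) * Pfun n x y (i + 2) * Pfun n x y (i + 1)) * hp1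

/-- the step identity for the second family. -/
lemma step_val {n : ℕ} {p : K} {x y : ℕ → K} (hn : 1 ≤ n) (hp : p ≠ 0)
    (hx : ∀ j, x j ≠ 0) (hy : ∀ j, y j ≠ 0)
    (hxper : ∀ j, x (j + n) = p⁻¹ * x j) (hyper : ∀ j, y (j + n) = p⁻¹ * y j)
    (hP : ∀ j, Pfun n x y j ≠ 0) (i : ℕ) :
    x (i + 2) * y (i + 2) * ((y (i + 2))⁻¹ + (p⁻¹ * (∏ t ∈ Icc (i + 2) (i + 1 + n), y t)
          - ∏ t ∈ Icc (i + 2) (i + 1 + n), x t) / Pfun n x y (i + 1))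
      = p * y (i + 2) * Pfun n x y (i + 2) / Pfun n x y (i + 1) := by
  have Ii := Pfun_ident hn hp hxper hyper (i + 1)
  rw [show i + 1 + 1 = i + 2 by omega] at Ii
  rw [show (y (i + 2))⁻¹ = 1 / y (i + 2) from inv_eq_one_div _,
    div_add_div _ _ (hy (i + 2)) (hP (i + 1)), one_mul, ← mul_div_assoc,
    div_eq_div_iff (mul_ne_zero (hy (i + 2)) (hP (i + 1))) (hP (i + 1))]
  linear_combination (-(y (i + 2) * Pfun n x y (i + 1))) * Ii


/-- the second family solves the system. -/
lemma fam2_sys {n : ℕ} {p : K} {x y : ℕ → K} (hn : 1 ≤ n) (hp : p ≠ 0)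
    (hx : ∀ j, x j ≠ 0) (hy : ∀ j, y j ≠ 0)
    (hxper : ∀ j, x (j + n) = p⁻¹ * x j) (hyper : ∀ j, y (j + n) = p⁻¹ * y j)
    (hP : ∀ j, Pfun n x y j ≠ 0) :
    SysDT n p x y (fun j => p * y j * Pfun n x y j / Pfun n x y (j - 1))
      (fun j => p⁻¹ * x j * Pfun n x y (j - 1) / Pfun n x y j) := by
  have hq : (p : K)⁻¹ ^ (n + 1) ≠ 0 := pow_ne_zero _ (inv_ne_zero hp)
  refine ⟨fun j hj => ?_, fun j hj => ?_, fun j hj => ?_, fun j hj => ?_⟩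
  · obtain ⟨i, rfl⟩ : ∃ i, j = i + 1 := ⟨j - 1, by omega⟩
    simp only [Nat.add_sub_cancel]
    field_simp [hP i, hP (i + 1)]
  · obtain ⟨i, rfl⟩ : ∃ i, j = i + 1 := ⟨j - 1, by omega⟩
    simp only [Nat.add_sub_cancel, show i + 1 + 1 = i + 2 from rfl,
      show i + 2 - 1 = i + 1 from rfl]
    rw [inv_u2 hn hp hx hy hxper hyper hP i, inv_v2 hn hp hx hy hxper hyper hP i]
    ring
  · obtain ⟨i, rfl⟩ : ∃ i, j = i + 1 := ⟨j - 1, by omega⟩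
    simp only [Nat.add_sub_cancel, show i + 1 + n - 1 = i + n from by omega]
    rw [show i + 1 + n = (i + 1) + n from rfl, hyper (i + 1),
      Pfun_per hxper hyper (i + 1), Pfun_per hxper hyper i]
    field_simp [hP i, hP (i + 1), hq]
  · obtain ⟨i, rfl⟩ : ∃ i, j = i + 1 := ⟨j - 1, by omega⟩
    simp only [Nat.add_sub_cancel, show i + 1 + n - 1 = i + n from by omega]
    rw [show i + 1 + n = (i + 1) + n from rfl, hxper (i + 1),
      Pfun_per hxper hyper (i + 1), Pfun_per hxper hyper i]
    field_simp [hP i, hP (i + 1), hq]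

/-- telescoping product for the second family `u`. -/
lemma prod_u2_gen {n : ℕ} {p : K} {x y : ℕ → K} (hp : p ≠ 0)
    (hP : ∀ j, Pfun n x y j ≠ 0) (m : ℕ) :
    ∏ j ∈ Icc 1 m, (p * y j * Pfun n x y j / Pfun n x y (j - 1))
      = p ^ m * (∏ j ∈ Icc 1 m, y j) * Pfun n x y m / Pfun n x y 0 := by
  induction m with
  | zero => simp [div_self (hP 0)]
  | succ m ih =>
    rw [Finset.prod_Icc_succ_top (by omega : 1 ≤ m + 1), ih,
      Finset.prod_Icc_succ_top (by omega : 1 ≤ m + 1)]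
    simp only [Nat.add_sub_cancel]
    field_simp [hP 0, hP m, hP (m + 1)]
    ring


/-- uniqueness: any solution is one of the two families. -/
lemma uniq_sol {n : ℕ} {p : K} {x y : ℕ → K} (hn : 1 ≤ n) (hp : p ≠ 0)
    (hx : ∀ j, x j ≠ 0) (hy : ∀ j, y j ≠ 0)
    (hxper : ∀ j, x (j + n) = p⁻¹ * x j) (hyper : ∀ j, y (j + n) = p⁻¹ * y j)
    (hP : ∀ j, Pfun n x y j ≠ 0)
    (hD : ∀ j, p⁻¹ * (∏ t ∈ Finset.Icc (j + 1) (j + n), y t) -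
      ∏ t ∈ Finset.Icc (j + 1) (j + n), x t ≠ 0)
    (u v : ℕ → K) (hsys : SysDT n p x y u v) :
    (∀ j, 1 ≤ j → u j = x j ∧ v j = y j) ∨
      (∀ j, 1 ≤ j →
        u j = p * y j * Pfun n x y j / Pfun n x y (j - 1) ∧
        v j = p⁻¹ * x j * Pfun n x y (j - 1) / Pfun n x y j) := by
  obtain ⟨h1, h2, h3, h4⟩ := hsys
  have hu0 : ∀ j, 1 ≤ j → u j ≠ 0 := by
    intro j hj h
    exact mul_ne_zero (hx j) (hy j) (by rw [h1 j hj, h, zero_mul])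
  have hv0 : ∀ j, 1 ≤ j → v j ≠ 0 := by
    intro j hj h
    exact mul_ne_zero (hx j) (hy j) (by rw [h1 j hj, h, mul_zero])
  have hrec : ∀ j, 1 ≤ j →
      u (j + 1) = x (j + 1) * y (j + 1) * ((x j)⁻¹ + (y (j + 1))⁻¹ - (u j)⁻¹) := by
    intro j hj
    have e1 : u (j + 1) = x (j + 1) * y (j + 1) * (v (j + 1))⁻¹ := by
      rw [h1 (j + 1) (by omega), mul_assoc, mul_inv_cancel₀ (hv0 (j + 1) (by omega)), mul_one]
    have e2 : (v (j + 1))⁻¹ = (x j)⁻¹ + (y (j + 1))⁻¹ - (u j)⁻¹ := by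
      linear_combination -(h2 j hj)
    rw [e1, e2]
  by_cases hcase : u 1 = x 1
  · left
    have hu : ∀ j, 1 ≤ j → u j = x j := by
      intro j hj
      induction j, hj using Nat.le_induction with
      | base => exact hcase
      | succ j hj ih =>
        rw [hrec j hj, ih]
        field_simp [hx j, hy (j + 1), hx (j + 1)]
        ring
    refine fun j hj => ⟨hu j hj, ?_⟩
    have := h1 j hj
    rw [hu j hj] at this
    exact (mul_left_cancel₀ (hx j) this.symm)
  · right
    set s : ℕ → K := fun j => 1 - u j / x j with hs
    have hs1 : s 1 ≠ 0 := by
      simp only [hs]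
      rw [sub_ne_zero]
      intro h
      exact hcase ((div_eq_one_iff_eq (hx 1)).mp h.symm)
    have hu_eq : ∀ j, u j = x j * (1 - s j) := by
      intro j
      simp only [hs]
      field_simp
      rw [sub_sub_cancel]
      field_simp [hx j]
    have hsrec : ∀ j, 1 ≤ j → s (j + 1) = y (j + 1) * s j / u j := by
      intro j hj
      show 1 - u (j + 1) / x (j + 1) = _
      rw [hrec j hj, show x (j + 1) * y (j + 1) * ((x j)⁻¹ + (y (j + 1))⁻¹ - (u j)⁻¹)
          = (y (j + 1) * ((x j)⁻¹ + (y (j + 1))⁻¹ - (u j)⁻¹)) * x (j + 1) from by ring,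
        mul_div_cancel_right₀ _ (hx (j + 1))]
      show _ = y (j + 1) * (1 - u j / x j) / u j
      field_simp [hx j, hy (j + 1), hu0 j hj]
      ring
    have hs_ne : ∀ j, 1 ≤ j → s j ≠ 0 := by
      intro j hj
      induction j, hj using Nat.le_induction with
      | base => exact hs1
      | succ j hj ih =>
        rw [hsrec j hj]
        exact div_ne_zero (mul_ne_zero (hy (j + 1)) ih) (hu0 j hj)
    set w : ℕ → K := fun j => (∏ t ∈ Icc 1 j, y t) / s j with hw
    have hone_sub : ∀ j, 1 ≤ j → (1 : K) - s j ≠ 0 := by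
      intro j hj
      have h := hu0 j hj
      rw [hu_eq j] at h
      exact (mul_ne_zero_iff.mp h).2
    have hwrec : ∀ j, 1 ≤ j → w (j + 1) = x j * (w j - ∏ t ∈ Icc 1 j, y t) := by
      intro j hj
      show (∏ t ∈ Icc 1 (j + 1), y t) / s (j + 1) = x j * ((∏ t ∈ Icc 1 j, y t) / s j - _)
      rw [Finset.prod_Icc_succ_top (by omega : 1 ≤ j + 1) y, hsrec j hj, hu_eq j]
      field_simp [hy (j + 1), hs_ne j hj, hx j, hone_sub j hj]
    have hwclosed : ∀ m, w (m + 1) = (∏ t ∈ Icc 1 m, x t) * w 1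
        - ∑ k ∈ Icc 1 m, (∏ t ∈ Icc k m, x t) * ∏ t ∈ Icc 1 k, y t := by
      intro m
      induction m with
      | zero => simp
      | succ m ih =>
        rw [hwrec (m + 1) (by omega), ih]
        have hsum : ∑ k ∈ Icc 1 (m + 1), (∏ t ∈ Icc k (m + 1), x t) * ∏ t ∈ Icc 1 k, y t
            = x (m + 1) * (∑ k ∈ Icc 1 m, (∏ t ∈ Icc k m, x t) * ∏ t ∈ Icc 1 k, y t)
              + x (m + 1) * ∏ t ∈ Icc 1 (m + 1), y t := by
          rw [Finset.sum_Icc_succ_top (by omega : 1 ≤ m + 1), Finset.mul_sum]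
          rw [Finset.Icc_self, Finset.prod_singleton]
          congr 1
          refine Finset.sum_congr rfl fun k hk => ?_
          obtain ⟨hk1, hk2⟩ := Finset.mem_Icc.mp hk
          rw [Finset.prod_Icc_succ_top (by omega : k ≤ m + 1)]
          ring
        rw [hsum, Finset.prod_Icc_succ_top (by omega : 1 ≤ m + 1) x]
        ring
    have hP0 : Pfun n x y 0 = ∑ k ∈ Icc 1 n, (∏ t ∈ Icc k n, x t) * ∏ t ∈ Icc 1 k, y t := by
      unfold Pfun
      refine Finset.sum_congr rfl fun k hk => ?_
      simp only [zero_add]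
      ring
    have hsn : s (n + 1) = s 1 := by
      show 1 - u (n + 1) / x (n + 1) = 1 - u 1 / x 1
      rw [show n + 1 = 1 + n by omega, h3 1 le_rfl, hxper 1,
        mul_div_mul_left _ _ (inv_ne_zero hp)]
    have hw1def : w 1 = y 1 / s 1 := by
      show (∏ t ∈ Icc 1 1, y t) / s 1 = _
      rw [Finset.Icc_self, Finset.prod_singleton]
    have hw1 : w (n + 1) = p⁻¹ * (∏ t ∈ Icc 1 n, y t) * w 1 := by
      show (∏ t ∈ Icc 1 (n + 1), y t) / s (n + 1) = _
      rw [hsn, Finset.prod_Icc_succ_top (by omega : 1 ≤ n + 1) y,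
        show n + 1 = 1 + n by omega, hyper 1, hw1def]
      field_simp [hs_ne 1 le_rfl]
    have hD0 : p⁻¹ * (∏ t ∈ Icc 1 n, y t) - ∏ t ∈ Icc 1 n, x t ≠ 0 := by
      have := hD 0
      simpa using this
    have hkey : w 1 * (p⁻¹ * (∏ t ∈ Icc 1 n, y t) - ∏ t ∈ Icc 1 n, x t) = -(Pfun n x y 0) := by
      have h := hwclosed n
      rw [hw1, ← hP0] at h
      linear_combination h
    have hs1val : s 1 = -(y 1) * (p⁻¹ * (∏ t ∈ Icc 1 n, y t) - ∏ t ∈ Icc 1 n, x t)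
        / Pfun n x y 0 := by
      rw [hw1def, div_mul_eq_mul_div] at hkey
      have h' := (div_eq_iff hs1).mp hkey
      rw [eq_div_iff (hP 0)]
      linear_combination h'
    have hbase : u 1 = p * y 1 * Pfun n x y 1 / Pfun n x y 0 := by
      have hI := Pfun_ident hn hp hxper hyper 0
      simp only [zero_add] at hI
      rw [hu_eq 1, hs1val]
      have hp1 : p * p⁻¹ = 1 := mul_inv_cancel₀ hp
      field_simp [hP 0]
      linear_combination (-p) * hI
        - (x 1 * y 1 * ∏ t ∈ Icc 1 n, y t) * hp1
    have hufull : ∀ i, u (i + 1) = p * y (i + 1) * Pfun n x y (i + 1) / Pfun n x y i := by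
      intro i
      induction i with
      | zero => simpa using hbase
      | succ i ih =>
        rw [hrec (i + 1) (by omega), ih]
        rw [show i + 1 + 1 = i + 2 from rfl]
        rw [inv_u2 hn hp hx hy hxper hyper hP i]
        have hstep := step_val hn hp hx hy hxper hyper hP i
        linear_combination hstep
    intro j hj
    obtain ⟨i, rfl⟩ : ∃ i, j = i + 1 := ⟨j - 1, by omega⟩
    have hune : u (i + 1) ≠ 0 := hu0 _ hj
    have hveq : x (i + 1) * y (i + 1)
        = u (i + 1) * (p⁻¹ * x (i + 1) * Pfun n x y i / Pfun n x y (i + 1)) := by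
      rw [hufull i]
      field_simp [hP i, hP (i + 1)]
    refine ⟨by simpa using hufull i, ?_⟩
    simp only [Nat.add_sub_cancel]
    exact mul_left_cancel₀ hune ((h1 _ hj).symm.trans hveq)



lemma prod_u2_final {n : ℕ} {p : K} {x y : ℕ → K} (hp : p ≠ 0)
    (hxper : ∀ j, x (j + n) = p⁻¹ * x j) (hyper : ∀ j, y (j + n) = p⁻¹ * y j)
    (hP : ∀ j, Pfun n x y j ≠ 0) :
    ∏ j ∈ Icc 1 n, (p * y j * Pfun n x y j / Pfun n x y (j - 1))
      = p⁻¹ * ∏ j ∈ Icc 1 n, y j := by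
  have h := prod_u2_gen hp hP (x := x) n
  have hper := Pfun_per hxper hyper (x := x) (y := y) 0
  simp only [zero_add] at hper
  rw [hper] at h
  rw [h]
  field_simp [hP 0]
  rw [one_div, inv_pow, pow_succ]
  field_simp

lemma prod_v2_final {n : ℕ} {p : K} {x y : ℕ → K} (hp : p ≠ 0)
    (hx : ∀ j, x j ≠ 0) (hy : ∀ j, y j ≠ 0)
    (hxper : ∀ j, x (j + n) = p⁻¹ * x j) (hyper : ∀ j, y (j + n) = p⁻¹ * y j)
    (hP : ∀ j, Pfun n x y j ≠ 0) :
    ∏ j ∈ Icc 1 n, (p⁻¹ * x j * Pfun n x y (j - 1) / Pfun n x y j)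
      = p * ∏ j ∈ Icc 1 n, x j := by
  have hstep : ∀ j ∈ Icc 1 n, (p⁻¹ * x j * Pfun n x y (j - 1) / Pfun n x y j)
      = (x j * y j) / (p * y j * Pfun n x y j / Pfun n x y (j - 1)) := by
    intro j hj
    have hj1 : 1 ≤ j := (Finset.mem_Icc.mp hj).1
    obtain ⟨i, rfl⟩ : ∃ i, j = i + 1 := ⟨j - 1, by omega⟩
    simp only [Nat.add_sub_cancel]
    have hu2ne : p * y (i + 1) * Pfun n x y (i + 1) / Pfun n x y i ≠ 0 :=
      div_ne_zero (mul_ne_zero (mul_ne_zero hp (hy _)) (hP _)) (hP _)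
    rw [eq_div_iff hu2ne]
    field_simp [hP i, hP (i + 1)]
  have hYne : (∏ j ∈ Icc 1 n, y j) ≠ 0 := Finset.prod_ne_zero_iff.mpr fun j _ => hy j
  rw [Finset.prod_congr rfl hstep, Finset.prod_div_distrib,
    prod_u2_final hp hxper hyper hP, Finset.prod_mul_distrib]
  field_simp [hYne]

end Aux

/-- (generic situation) the discrete Toda system has exactly the two
solutions `(u,v) = (x,y)` and `u_j = p·y_j·P_j/P_{j−1}`, `v_j = p⁻¹·x_j·P_{j−1}/P_j`;
moreover they are characterized by `u₁⋯u_n = x₁⋯x_n`, `v₁⋯v_n = y₁⋯y_n`, respectively by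
`u₁⋯u_n = p⁻¹y₁⋯y_n`, `v₁⋯v_n = p·x₁⋯x_n`. -/
theorem tropical_rsk_stmt19 {K : Type*} [Field K] {n : ℕ} (hn : 1 ≤ n)
    (p : K) (hp : p ≠ 0) (x y : ℕ → K)
    (hx : ∀ j, x j ≠ 0) (hy : ∀ j, y j ≠ 0)
    (hxper : ∀ j, x (j + n) = p⁻¹ * x j) (hyper : ∀ j, y (j + n) = p⁻¹ * y j)
    (hP : ∀ j, Pfun n x y j ≠ 0)
    (hD : ∀ j, p⁻¹ * (∏ t ∈ Finset.Icc (j + 1) (j + n), y t) -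
      ∏ t ∈ Finset.Icc (j + 1) (j + n), x t ≠ 0) :
    SysDT n p x y x y ∧
    SysDT n p x y (fun j => p * y j * Pfun n x y j / Pfun n x y (j - 1))
      (fun j => p⁻¹ * x j * Pfun n x y (j - 1) / Pfun n x y j) ∧
    (∀ u v : ℕ → K, SysDT n p x y u v →
      (∀ j, 1 ≤ j → u j = x j ∧ v j = y j) ∨
      (∀ j, 1 ≤ j →
        u j = p * y j * Pfun n x y j / Pfun n x y (j - 1) ∧
        v j = p⁻¹ * x j * Pfun n x y (j - 1) / Pfun n x y j)) ∧
    (∀ u v : ℕ → K, SysDT n p x y u v →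
      (((∏ j ∈ Finset.Icc 1 n, u j) = (∏ j ∈ Finset.Icc 1 n, x j) ∧
        (∏ j ∈ Finset.Icc 1 n, v j) = ∏ j ∈ Finset.Icc 1 n, y j) ↔
        (∀ j, 1 ≤ j → u j = x j ∧ v j = y j)) ∧
      (((∏ j ∈ Finset.Icc 1 n, u j) = p⁻¹ * ∏ j ∈ Finset.Icc 1 n, y j ∧
        (∏ j ∈ Finset.Icc 1 n, v j) = p * ∏ j ∈ Finset.Icc 1 n, x j) ↔
        (∀ j, 1 ≤ j →
          u j = p * y j * Pfun n x y j / Pfun n x y (j - 1) ∧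
          v j = p⁻¹ * x j * Pfun n x y (j - 1) / Pfun n x y j))) := by
  refine ⟨⟨fun j _ => rfl, fun j _ => rfl, fun j _ => hxper j, fun j _ => hyper j⟩,
    fam2_sys hn hp hx hy hxper hyper hP,
    uniq_sol hn hp hx hy hxper hyper hP hD, ?_⟩
  intro u v hsys
  have hD0 : p⁻¹ * (∏ t ∈ Icc 1 n, y t) - ∏ t ∈ Icc 1 n, x t ≠ 0 := by simpa using hD 0
  constructor
  · constructor
    · rintro ⟨hu, hv⟩
      rcases uniq_sol hn hp hx hy hxper hyper hP hD u v hsys with hA | hB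
      · exact hA
      · exfalso
        have hpu : ∏ j ∈ Icc 1 n, u j = p⁻¹ * ∏ j ∈ Icc 1 n, y j := by
          rw [Finset.prod_congr rfl fun j hj => (hB j (Finset.mem_Icc.mp hj).1).1]
          exact prod_u2_final hp hxper hyper hP
        rw [hu] at hpu
        exact hD0 (by rw [hpu]; ring)
    · intro hA
      exact ⟨Finset.prod_congr rfl fun j hj => (hA j (Finset.mem_Icc.mp hj).1).1,
        Finset.prod_congr rfl fun j hj => (hA j (Finset.mem_Icc.mp hj).1).2⟩
  · constructor
    · rintro ⟨hu, hv⟩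
      rcases uniq_sol hn hp hx hy hxper hyper hP hD u v hsys with hA | hB
      · exfalso
        have hpu : ∏ j ∈ Icc 1 n, u j = ∏ j ∈ Icc 1 n, x j :=
          Finset.prod_congr rfl fun j hj => (hA j (Finset.mem_Icc.mp hj).1).1
        rw [hu] at hpu
        exact hD0 (by rw [← hpu]; ring)
      · exact hB
    · intro hB
      refine ⟨?_, ?_⟩
      · rw [Finset.prod_congr rfl fun j hj => (hB j (Finset.mem_Icc.mp hj).1).1]
        exact prod_u2_final hp hxper hyper hP
      · rw [Finset.prod_congr rfl fun j hj => (hB j (Finset.mem_Icc.mp hj).1).2]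
        exact prod_v2_final hp hx hy hxper hyper hP
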